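/- Algebraic core of Proposition 2.9: Let n ≥ 1, ħ ∈ ℂ with ħ ≠ 0, and y₁,…,yₙ, u₁,…,uₙ ∈ ℂ with uᵢ ≠ 0 for all i and (yᵢ−yⱼ)² ≠ (ħ²/4)(uᵢ+uⱼ)² for all i ≠ j. For a nonempty subset B of {1,…,n}, call a bijection σ : B → B cyclic if it acts transitively on B (the identity if |B| = 1). Then ∏_{i=1}^{n} 1/(ħuᵢ) · ∏_{1≤i<j≤n} [((yᵢ−yⱼ)² − (ħ²/4)(uᵢ−uⱼ)²)] / [((yᵢ−yⱼ)² − (ħ²/4)(uᵢ+uⱼ)²)] = ∑_π ∏_{B ∈ π} [ (−1)^{|B|−1} · ∑_{σ cyclic on B} ∏_{i ∈ B} 1/(yᵢ − y_{σ(i)} + (ħ/2)(uᵢ + u_{σ(i)})) ], where the outer sum runs over all set partitions π of {1,…,n}. -/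

import Mathlib

open scoped Classical

open Equiv Finset

lemma noncommProd_apply_eq_self {γ β : Type*} [DecidableEq γ] (s : Finset γ) (g : γ → Equiv.Perm β)
    (comm : (↑s : Set γ).Pairwise (Function.onFun Commute g)) (x : β)
    (hfix : ∀ b ∈ s, g b x = x) : s.noncommProd g comm x = x := by
  induction s using Finset.induction with
  | empty => simp
  | insert _ _ hnot ih =>
    rename_i d t'
    rw [Finset.noncommProd_insert_of_notMem _ _ _ _ hnot]
    have hx : t'.noncommProd g (comm.mono (by simp [Finset.subset_insert])) x = x :=
      ih _ (fun b hb => hfix b (Finset.mem_insert_of_mem hb))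
    simp only [Equiv.Perm.mul_apply, hx]
    exact hfix d (Finset.mem_insert_self d t')

/-- A noncommProd of permutations where all factors except `a` fix both `x` and `g a x`
evaluates to `g a x` at `x`. -/
lemma noncommProd_apply_eq {γ β : Type*} [DecidableEq γ] (s : Finset γ) (g : γ → Equiv.Perm β)
    (comm : (↑s : Set γ).Pairwise (Function.onFun Commute g)) (a : γ) (ha : a ∈ s) (x : β)
    (hfix : ∀ b ∈ s, b ≠ a → g b x = x) (hfix2 : ∀ b ∈ s, b ≠ a → g b (g a x) = g a x) :
    s.noncommProd g comm x = g a x := by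
  induction s using Finset.induction with
  | empty => exact absurd ha (Finset.notMem_empty a)
  | insert _ _ hnot ih =>
    rename_i c t
    rw [Finset.noncommProd_insert_of_notMem _ _ _ _ hnot]
    rcases eq_or_ne c a with rfl | hca
    · have hx : t.noncommProd g (comm.mono (by simp [Finset.subset_insert])) x = x :=
        noncommProd_apply_eq_self t g _ x
          (fun b hb => hfix b (Finset.mem_insert_of_mem hb) (fun h => hnot (h ▸ hb)))
      simp only [Equiv.Perm.mul_apply, hx]
    · have ha' : a ∈ t := by
        rcases Finset.mem_insert.mp ha with h | h
        · exact absurd h.symm hca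
        · exact h
      have hprev := ih (comm.mono (by simp [Finset.subset_insert])) ha'
        (fun b hb hba => hfix b (Finset.mem_insert_of_mem hb) hba)
        (fun b hb hba => hfix2 b (Finset.mem_insert_of_mem hb) hba)
      simp only [Equiv.Perm.mul_apply, hprev]
      exact hfix2 c (Finset.mem_insert_self c t) hca
variable {n : ℕ}

/-- cyclic (transitive) permutation of a block -/
def IsCyclicOn {B : Finset (Fin n)} (σ : Equiv.Perm {x // x ∈ B}) : Prop :=
  ∀ i j : {x // x ∈ B}, ∃ k : ℕ, (σ ^ k) i = j

noncomputable def pext (B : Finset (Fin n)) (σ : Equiv.Perm {x // x ∈ B}) : Equiv.Perm (Fin n) :=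
  Equiv.Perm.ofSubtype σ

lemma pext_apply_mem (B : Finset (Fin n)) (σ : Equiv.Perm {x // x ∈ B}) {i : Fin n}
    (hi : i ∈ B) : pext B σ i = ↑(σ ⟨i, hi⟩) :=
  Equiv.Perm.ofSubtype_apply_of_mem σ hi

lemma pext_apply_not_mem (B : Finset (Fin n)) (σ : Equiv.Perm {x // x ∈ B}) {i : Fin n}
    (hi : i ∉ B) : pext B σ i = i :=
  Equiv.Perm.ofSubtype_apply_of_not_mem σ hi

lemma pext_mem (B : Finset (Fin n)) (σ : Equiv.Perm {x // x ∈ B}) {i : Fin n}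
    (hi : i ∈ B) : pext B σ i ∈ B := by
  rw [pext_apply_mem B σ hi]; exact (σ ⟨i, hi⟩).2

lemma pext_pow_apply_mem (B : Finset (Fin n)) (σ : Equiv.Perm {x // x ∈ B}) {i : Fin n}
    (hi : i ∈ B) (k : ℕ) : (pext B σ ^ k) i = ↑((σ ^ k) ⟨i, hi⟩) := by
  have : pext B σ ^ k = pext B (σ ^ k) := by
    simp [pext, map_pow]
  rw [this, pext_apply_mem]

lemma IsCyclicOn.no_fixed {B : Finset (Fin n)} {σ : Equiv.Perm {x // x ∈ B}}
    (h : IsCyclicOn σ) (hcard : 2 ≤ B.card) (x : {x // x ∈ B}) : σ x ≠ x := by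
  intro hfix
  obtain ⟨y, hy, hyx⟩ := Finset.exists_mem_ne hcard x
  obtain ⟨k, hk⟩ := h x ⟨y, hy⟩
  have : ∀ m : ℕ, (σ ^ m) x = x := by
    intro m
    induction m with
    | zero => rfl
    | succ m ih => rw [pow_succ, Equiv.Perm.mul_apply, hfix, ih]
  rw [this k] at hk
  exact hyx (congrArg Subtype.val hk).symm

lemma support_pext {B : Finset (Fin n)} {σ : Equiv.Perm {x // x ∈ B}}
    (h : IsCyclicOn σ) (hcard : 2 ≤ B.card) : (pext B σ).support = B := by
  ext i
  rw [Equiv.Perm.mem_support]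
  constructor
  · intro hne
    by_contra hi
    exact hne (pext_apply_not_mem B σ hi)
  · intro hi
    rw [pext_apply_mem B σ hi]
    intro hc
    exact h.no_fixed hcard ⟨i, hi⟩ (Subtype.ext hc)

lemma isCycle_pext {B : Finset (Fin n)} {σ : Equiv.Perm {x // x ∈ B}}
    (h : IsCyclicOn σ) (hcard : 2 ≤ B.card) : (pext B σ).IsCycle := by
  obtain ⟨a, ha⟩ := Finset.card_pos.mp (lt_of_lt_of_le two_pos hcard)
  refine ⟨a, ?_, ?_⟩
  · rw [pext_apply_mem B σ ha]
    intro hc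
    exact h.no_fixed hcard ⟨a, ha⟩ (Subtype.ext hc)
  · intro y hy
    have hyB : y ∈ B := by
      by_contra hyB
      exact hy (pext_apply_not_mem B σ hyB)
    obtain ⟨k, hk⟩ := h ⟨a, ha⟩ ⟨y, hyB⟩
    refine ⟨(k : ℤ), ?_⟩
    rw [zpow_natCast, pext_pow_apply_mem B σ ha k, hk]

lemma sign_pext {B : Finset (Fin n)} {σ : Equiv.Perm {x // x ∈ B}}
    (h : IsCyclicOn σ) (hne : B.Nonempty) :
    Equiv.Perm.sign (pext B σ) = (-1 : ℤˣ) ^ (B.card - 1) := by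
  rcases eq_or_lt_of_le (Nat.succ_le_of_lt (Finset.Nonempty.card_pos hne)) with h1 | h1
  · -- card = 1 : σ is the identity on a subsingleton
    have hcard : B.card = 1 := h1.symm
    have : pext B σ = 1 := by
      ext i
      rcases em (i ∈ B) with hi | hi
      · rw [pext_apply_mem B σ hi]
        obtain ⟨a, hB⟩ := Finset.card_eq_one.mp hcard
        have h2 : ∀ z w : {x // x ∈ B}, z = w := by
          intro z w
          exact Subtype.ext (Finset.card_le_one.mp hcard.le _ z.2 _ w.2)
        rw [h2 (σ ⟨i, hi⟩) ⟨i, hi⟩]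
        rfl
      · rw [pext_apply_not_mem B σ hi]
        rfl
    rw [this, hcard]
    simp
  · have hcard : 2 ≤ B.card := h1
    rw [(isCycle_pext h hcard).sign, support_pext h hcard]
    have : B.card = (B.card - 1) + 1 := (Nat.succ_pred_eq_of_pos (lt_of_lt_of_le two_pos hcard)).symm
    rw [this, pow_succ]
    simp
def BlocksDisjoint {n : ℕ} (π : Finset (Finset (Fin n))) : Prop :=
  ∀ B ∈ π, ∀ C ∈ π, B ≠ C → ∀ i : Fin n, i ∈ B → i ∉ C

lemma glue_comm {π : Finset (Finset (Fin n))} (f : ∀ B ∈ π, Equiv.Perm {x // x ∈ B})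
    (hdis : BlocksDisjoint π) :
    (↑π.attach : Set {B // B ∈ π}).Pairwise
      (Function.onFun Commute fun B : {B // B ∈ π} => pext B.1 (f B.1 B.2)) := by
  intro B _ C _ hBC
  apply Equiv.Perm.Disjoint.commute
  intro x
  rcases em (x ∈ B.1) with hx | hx
  · right
    exact pext_apply_not_mem _ _ (hdis B.1 B.2 C.1 C.2 (fun h => hBC (Subtype.ext h)) x hx)
  · left
    exact pext_apply_not_mem _ _ hx

noncomputable def glue (π : Finset (Finset (Fin n))) (f : ∀ B ∈ π, Equiv.Perm {x // x ∈ B})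
    (hdis : BlocksDisjoint π) : Equiv.Perm (Fin n) :=
  π.attach.noncommProd (fun B => pext B.1 (f B.1 B.2)) (glue_comm f hdis)

lemma glue_apply_of_mem {π : Finset (Finset (Fin n))} (f : ∀ B ∈ π, Equiv.Perm {x // x ∈ B})
    (hdis : BlocksDisjoint π) {B : Finset (Fin n)} (hB : B ∈ π) {i : Fin n} (hi : i ∈ B) :
    glue π f hdis i = ↑(f B hB ⟨i, hi⟩) := by
  rw [glue, noncommProd_apply_eq _ _ _ ⟨B, hB⟩ (Finset.mem_attach _ _) i
    ?_ ?_, pext_apply_mem B (f B hB) hi]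
  · intro C _ hC
    exact pext_apply_not_mem _ _
      (hdis B hB C.1 C.2 (fun h => hC (Subtype.ext h.symm)) i hi)
  · intro C _ hC
    exact pext_apply_not_mem _ _
      (hdis B hB C.1 C.2 (fun h => hC (Subtype.ext h.symm)) _ (pext_mem B (f B hB) hi))

lemma glue_apply_of_not_mem {π : Finset (Finset (Fin n))} (f : ∀ B ∈ π, Equiv.Perm {x // x ∈ B})
    (hdis : BlocksDisjoint π) {i : Fin n} (hi : ∀ B ∈ π, i ∉ B) :
    glue π f hdis i = i :=
  noncommProd_apply_eq_self _ _ _ i (fun C _ => pext_apply_not_mem _ _ (hi C.1 C.2))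

lemma glue_pow_apply {π : Finset (Finset (Fin n))} (f : ∀ B ∈ π, Equiv.Perm {x // x ∈ B})
    (hdis : BlocksDisjoint π) {B : Finset (Fin n)} (hB : B ∈ π) {i : Fin n} (hi : i ∈ B)
    (k : ℕ) : (glue π f hdis ^ k) i = ↑((f B hB ^ k) ⟨i, hi⟩) := by
  induction k with
  | zero => rfl
  | succ k ih =>
    rw [pow_succ', Equiv.Perm.mul_apply, ih,
      glue_apply_of_mem f hdis hB ((f B hB ^ k) ⟨i, hi⟩).2, pow_succ',
      Equiv.Perm.mul_apply]

lemma sign_glue {π : Finset (Finset (Fin n))} (f : ∀ B ∈ π, Equiv.Perm {x // x ∈ B})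
    (hdis : BlocksDisjoint π) (hcyc : ∀ B (hB : B ∈ π), IsCyclicOn (f B hB))
    (hne : ∀ B ∈ π, B.Nonempty) :
    Equiv.Perm.sign (glue π f hdis) = ∏ B ∈ π, (-1 : ℤˣ) ^ (B.card - 1) := by
  rw [glue, Finset.map_noncommProd]
  rw [Finset.noncommProd_eq_prod]
  rw [← Finset.prod_attach π (fun B => (-1 : ℤˣ) ^ (B.card - 1))]
  exact Finset.prod_congr rfl (fun B _ => sign_pext (hcyc B.1 B.2) (hne B.1 B.2))

/-! ### Orbits of a permutation -/

noncomputable def orb (σ : Equiv.Perm (Fin n)) (i : Fin n) : Finset (Fin n) :=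
  Finset.univ.filter (fun j => ∃ k : ℕ, (σ ^ k) i = j)

lemma mem_orb {σ : Equiv.Perm (Fin n)} {i j : Fin n} :
    j ∈ orb σ i ↔ ∃ k : ℕ, (σ ^ k) i = j := by
  simp [orb]

lemma self_mem_orb (σ : Equiv.Perm (Fin n)) (i : Fin n) : i ∈ orb σ i :=
  mem_orb.mpr ⟨0, rfl⟩

lemma orb_symm {σ : Equiv.Perm (Fin n)} {i j : Fin n} (h : ∃ k : ℕ, (σ ^ k) i = j) :
    ∃ k : ℕ, (σ ^ k) j = i := by
  obtain ⟨k, hk⟩ := h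
  set t := orderOf σ with ht
  have htpos : 0 < t := orderOf_pos σ
  refine ⟨k * (t - 1), ?_⟩
  have h1 : (σ ^ (k * (t - 1))) ((σ ^ k) i) = (σ ^ (k * (t - 1) + k)) i := by
    rw [pow_add, Equiv.Perm.mul_apply]
  have h2 : k * (t - 1) + k = k * t := by
    rw [← Nat.mul_succ]
    congr 1
    omega
  rw [← hk, h1, h2, mul_comm, pow_mul, pow_orderOf_eq_one]
  simp

lemma orb_trans {σ : Equiv.Perm (Fin n)} {i j m : Fin n} (h1 : ∃ k : ℕ, (σ ^ k) i = j)
    (h2 : ∃ k : ℕ, (σ ^ k) j = m) : ∃ k : ℕ, (σ ^ k) i = m := by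
  obtain ⟨k1, hk1⟩ := h1
  obtain ⟨k2, hk2⟩ := h2
  exact ⟨k2 + k1, by rw [pow_add, Equiv.Perm.mul_apply, hk1, hk2]⟩

lemma orb_eq_of_mem {σ : Equiv.Perm (Fin n)} {i j : Fin n} (h : j ∈ orb σ i) :
    orb σ j = orb σ i := by
  rw [mem_orb] at h
  ext m
  rw [mem_orb, mem_orb]
  exact ⟨fun hm => orb_trans h hm, fun hm => orb_trans (orb_symm h) hm⟩

noncomputable def parts (σ : Equiv.Perm (Fin n)) : Finset (Finset (Fin n)) :=
  Finset.univ.image (orb σ)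

lemma mem_parts {σ : Equiv.Perm (Fin n)} {B : Finset (Fin n)} :
    B ∈ parts σ ↔ ∃ i, orb σ i = B := by
  simp [parts]

lemma parts_invariant {σ : Equiv.Perm (Fin n)} {B : Finset (Fin n)} (hB : B ∈ parts σ)
    (x : Fin n) : x ∈ B ↔ σ x ∈ B := by
  obtain ⟨i, rfl⟩ := mem_parts.mp hB
  rw [mem_orb, mem_orb]
  constructor
  · intro ⟨k, hk⟩
    exact ⟨k + 1, by rw [pow_succ', Equiv.Perm.mul_apply, hk]⟩
  · intro h
    refine orb_trans h (orb_symm ⟨1, ?_⟩)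
    simp

noncomputable def restr (σ : Equiv.Perm (Fin n)) (B : Finset (Fin n)) (hB : B ∈ parts σ) :
    Equiv.Perm {x // x ∈ B} :=
  σ.subtypePerm (fun x => (parts_invariant hB x).symm)

lemma restr_apply {σ : Equiv.Perm (Fin n)} {B : Finset (Fin n)} (hB : B ∈ parts σ)
    (x : {x // x ∈ B}) : (restr σ B hB x : Fin n) = σ x := rfl

lemma restr_pow_apply {σ : Equiv.Perm (Fin n)} {B : Finset (Fin n)} (hB : B ∈ parts σ)
    (k : ℕ) (x : {x // x ∈ B}) : ((restr σ B hB ^ k) x : Fin n) = (σ ^ k) x := by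
  rw [restr, Equiv.Perm.subtypePerm_pow]
  rfl

lemma restr_cyclic {σ : Equiv.Perm (Fin n)} {B : Finset (Fin n)} (hB : B ∈ parts σ) :
    IsCyclicOn (restr σ B hB) := by
  intro x y
  obtain ⟨i, hi⟩ := mem_parts.mp hB
  have hx : (x : Fin n) ∈ orb σ i := hi ▸ x.2
  have hy : (y : Fin n) ∈ orb σ i := hi ▸ y.2
  obtain ⟨k, hk⟩ := orb_trans (orb_symm (mem_orb.mp hx)) (mem_orb.mp hy)
  exact ⟨k, Subtype.ext (by rw [restr_pow_apply hB k x, hk])⟩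

lemma parts_nonempty {σ : Equiv.Perm (Fin n)} {B : Finset (Fin n)} (hB : B ∈ parts σ) :
    B.Nonempty := by
  obtain ⟨i, rfl⟩ := mem_parts.mp hB
  exact ⟨i, self_mem_orb σ i⟩

lemma parts_existsUnique (σ : Equiv.Perm (Fin n)) (i : Fin n) :
    ∃! B, B ∈ parts σ ∧ i ∈ B := by
  refine ⟨orb σ i, ⟨mem_parts.mpr ⟨i, rfl⟩, self_mem_orb σ i⟩, ?_⟩
  rintro C ⟨hC, hiC⟩
  obtain ⟨j, rfl⟩ := mem_parts.mp hC
  exact (orb_eq_of_mem hiC).symm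

/-! ### Partition basics -/

lemma partition_blocksDisjoint {π : Finset (Finset (Fin n))}
    (h : ∀ i : Fin n, ∃! B, B ∈ π ∧ i ∈ B) : BlocksDisjoint π := by
  intro B hB C hC hBC i hiB hiC
  exact hBC ((h i).unique ⟨hB, hiB⟩ ⟨hC, hiC⟩)

lemma glue_restr (σ : Equiv.Perm (Fin n)) :
    glue (parts σ) (restr σ) (partition_blocksDisjoint (parts_existsUnique σ)) = σ := by
  ext i
  rw [glue_apply_of_mem (restr σ) _ (mem_parts.mpr ⟨i, rfl⟩) (self_mem_orb σ i)]
  rfl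

lemma orb_glue {π : Finset (Finset (Fin n))} (f : ∀ B ∈ π, Equiv.Perm {x // x ∈ B})
    (hdis : BlocksDisjoint π) (hcyc : ∀ B (hB : B ∈ π), IsCyclicOn (f B hB))
    {B : Finset (Fin n)} (hB : B ∈ π) {i : Fin n} (hi : i ∈ B) :
    orb (glue π f hdis) i = B := by
  ext j
  rw [mem_orb]
  constructor
  · rintro ⟨k, hk⟩
    rw [glue_pow_apply f hdis hB hi k] at hk
    rw [← hk]
    exact ((f B hB ^ k) ⟨i, hi⟩).2
  · intro hj
    obtain ⟨k, hk⟩ := hcyc B hB ⟨i, hi⟩ ⟨j, hj⟩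
    exact ⟨k, by rw [glue_pow_apply f hdis hB hi k, hk]⟩

lemma parts_glue {π : Finset (Finset (Fin n))} (f : ∀ B ∈ π, Equiv.Perm {x // x ∈ B})
    (hdis : BlocksDisjoint π) (hcyc : ∀ B (hB : B ∈ π), IsCyclicOn (f B hB))
    (hne : ∀ B ∈ π, B.Nonempty) (hcov : ∀ i : Fin n, ∃ B ∈ π, i ∈ B) :
    parts (glue π f hdis) = π := by
  ext C
  rw [mem_parts]
  constructor
  · rintro ⟨i, rfl⟩
    obtain ⟨B, hB, hiB⟩ := hcov i
    rw [orb_glue f hdis hcyc hB hiB]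
    exact hB
  · intro hC
    obtain ⟨i, hi⟩ := hne C hC
    exact ⟨i, orb_glue f hdis hcyc hC hi⟩

lemma restr_glue {π : Finset (Finset (Fin n))} (f : ∀ B ∈ π, Equiv.Perm {x // x ∈ B})
    (hdis : BlocksDisjoint π) {B : Finset (Fin n)} (hB : B ∈ π)
    (hB' : B ∈ parts (glue π f hdis)) :
    restr (glue π f hdis) B hB' = f B hB := by
  apply Equiv.ext
  intro x
  apply Subtype.ext
  rw [restr_apply hB' x]
  rw [glue_apply_of_mem f hdis hB x.2]

lemma sigma_pi_ext {π₁ π₂ : Finset (Finset (Fin n))} (h : π₁ = π₂)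
    {f₁ : ∀ B ∈ π₁, Equiv.Perm {x // x ∈ B}} {f₂ : ∀ B ∈ π₂, Equiv.Perm {x // x ∈ B}}
    (hf : ∀ B (h1 : B ∈ π₁) (h2 : B ∈ π₂), f₁ B h1 = f₂ B h2) :
    (⟨π₁, f₁⟩ : Σ π : Finset (Finset (Fin n)),
      ∀ B ∈ π, Equiv.Perm {x // x ∈ B}) = ⟨π₂, f₂⟩ := by
  subst h
  congr 1
  funext B hB
  exact hf B hB hB

theorem perm_sum_eq_partition_sum (M : Fin n → Fin n → ℂ) :
    ∑ σ : Equiv.Perm (Fin n), ((Equiv.Perm.sign σ : ℤ) : ℂ) * ∏ i : Fin n, M i (σ i) =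
      ∑ π ∈ Finset.univ.filter (fun π : Finset (Finset (Fin n)) =>
          (∀ B ∈ π, B.Nonempty) ∧ ∀ i : Fin n, ∃! B, B ∈ π ∧ i ∈ B),
        ∏ B ∈ π,
          ((-1 : ℂ) ^ (B.card - 1) *
            ∑ σ ∈ Finset.univ.filter (fun σ : Equiv.Perm {x // x ∈ B} =>
                ∀ i j : {x // x ∈ B}, ∃ k : ℕ, (σ ^ k) i = j),
              ∏ i : {x // x ∈ B}, M i.1 ((σ i : Fin n))) := by
  classical
  symm
  set P : Finset (Finset (Finset (Fin n))) := Finset.univ.filter (fun π : Finset (Finset (Fin n)) =>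
      (∀ B ∈ π, B.Nonempty) ∧ ∀ i : Fin n, ∃! B, B ∈ π ∧ i ∈ B) with hP
  set cyc : (B : Finset (Fin n)) → Finset (Equiv.Perm {x // x ∈ B}) := fun B =>
    Finset.univ.filter (fun σ : Equiv.Perm {x // x ∈ B} =>
      ∀ i j : {x // x ∈ B}, ∃ k : ℕ, (σ ^ k) i = j) with hcycdef
  have step1 : ∀ π ∈ P,
      (∏ B ∈ π, ((-1 : ℂ) ^ (B.card - 1) *
        ∑ σ ∈ cyc B, ∏ i : {x // x ∈ B}, M i.1 ((σ i : Fin n)))) =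
      ∑ p ∈ π.pi (fun B => cyc B), ∏ B ∈ π.attach,
        ((-1 : ℂ) ^ (B.1.card - 1) * ∏ i : {x // x ∈ B.1}, M i.1 ((p B.1 B.2 i : Fin n))) := by
    intro π _
    rw [← Finset.prod_sum π (fun B => cyc B)
      (fun B σ => (-1 : ℂ) ^ (B.card - 1) * ∏ i : {x // x ∈ B}, M i.1 ((σ i : Fin n)))]
    exact Finset.prod_congr rfl (fun B _ => Finset.mul_sum _ _ _)
  rw [Finset.sum_congr rfl step1, Finset.sum_sigma' P (fun π => π.pi (fun B => cyc B))
    (fun π p => ∏ B ∈ π.attach,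
      ((-1 : ℂ) ^ (B.1.card - 1) * ∏ i : {x // x ∈ B.1}, M i.1 ((p B.1 B.2 i : Fin n))))]
  refine Finset.sum_bij' (i := fun a ha => glue a.1 a.2
      (partition_blocksDisjoint ((Finset.mem_filter.mp (Finset.mem_sigma.mp ha).1).2.2)))
    (j := fun σ _ => ⟨parts σ, restr σ⟩) ?_ ?_ ?_ ?_ ?_
  · intro a ha
    exact Finset.mem_univ _
  · intro σ _
    rw [Finset.mem_sigma]
    constructor
    · rw [hP, Finset.mem_filter]
      exact ⟨Finset.mem_univ _, fun B hB => parts_nonempty hB, parts_existsUnique σ⟩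
    · rw [Finset.mem_pi]
      intro B hB
      rw [hcycdef, Finset.mem_filter]
      exact ⟨Finset.mem_univ _, restr_cyclic hB⟩
  · rintro ⟨π, p⟩ ha
    obtain ⟨h1, h2⟩ := Finset.mem_sigma.mp ha
    have hprop := (Finset.mem_filter.mp h1).2
    have hcyc : ∀ B (hB : B ∈ π), IsCyclicOn (p B hB) := by
      intro B hB
      have := Finset.mem_pi.mp h2 B hB
      rw [hcycdef, Finset.mem_filter] at this
      exact this.2
    have hcov : ∀ i : Fin n, ∃ B ∈ π, i ∈ B := by
      intro i
      obtain ⟨B, ⟨hB, hiB⟩, -⟩ := hprop.2 i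
      exact ⟨B, hB, hiB⟩
    have hparts := parts_glue p (partition_blocksDisjoint hprop.2) hcyc hprop.1 hcov
    exact sigma_pi_ext hparts (fun B hB' hB => restr_glue p _ hB hB')
  · intro σ _
    exact glue_restr σ
  · rintro ⟨π, p⟩ ha
    obtain ⟨h1, h2⟩ := Finset.mem_sigma.mp ha
    have hprop := (Finset.mem_filter.mp h1).2
    have hdis := partition_blocksDisjoint hprop.2
    have hcyc : ∀ B (hB : B ∈ π), IsCyclicOn (p B hB) := by
      intro B hB
      have := Finset.mem_pi.mp h2 B hB
      rw [hcycdef, Finset.mem_filter] at this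
      exact this.2
    set σ' := glue π p hdis with hσ'
    rw [Finset.prod_mul_distrib]
    have hsign : (∏ B ∈ π.attach, (-1 : ℂ) ^ (B.1.card - 1)) =
        ((Equiv.Perm.sign σ' : ℤ) : ℂ) := by
      rw [hσ', sign_glue p hdis hcyc hprop.1,
        Finset.prod_attach π (fun B => ((-1 : ℂ)) ^ (B.card - 1))]
      push_cast
      rw [Finset.prod_pow_eq_pow_sum]
    have hM : (∏ B ∈ π.attach, ∏ i : {x // x ∈ B.1}, M i.1 ((p B.1 B.2 i : Fin n))) =
        ∏ i : Fin n, M i (σ' i) := by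
      have inner : ∀ B : {B // B ∈ π},
          (∏ i : {x // x ∈ B.1}, M i.1 ((p B.1 B.2 i : Fin n))) =
          ∏ j ∈ B.1, M j (σ' j) := by
        intro B
        rw [← Finset.prod_coe_sort B.1 (fun j => M j (σ' j))]
        refine Finset.prod_congr rfl (fun i _ => ?_)
        rw [hσ', glue_apply_of_mem p hdis B.2 i.2]
      rw [Finset.prod_congr rfl (fun B _ => inner B),
        Finset.prod_attach π (fun B => ∏ j ∈ B, M j (σ' j)),
        ← Finset.prod_biUnion ?hd]
      · have huniv : (π.biUnion fun x => x) = Finset.univ := by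
          ext j
          simp only [Finset.mem_biUnion, Finset.mem_univ, iff_true]
          obtain ⟨B, ⟨hB, hjB⟩, -⟩ := hprop.2 j
          exact ⟨B, hB, hjB⟩
        rw [huniv]
      · intro B hB C hC hBC
        simp only [Function.onFun]
        rw [Finset.disjoint_left]
        intro x hxB hxC
        exact hdis B (Finset.mem_coe.mp hB) C (Finset.mem_coe.mp hC) hBC x hxB hxC
    rw [hsign, hM]

lemma erase_eq_Ioi_union_Iio {m : ℕ} (j : Fin m) :
    Finset.univ.erase j = Finset.Ioi j ∪ Finset.Iio j := by
  ext k
  simp only [Finset.mem_erase, Finset.mem_univ, and_true, Finset.mem_union,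
    Finset.mem_Ioi, Finset.mem_Iio]
  constructor
  · intro h
    rcases lt_or_gt_of_ne h with h' | h'
    · exact Or.inr h'
    · exact Or.inl h'
  · rintro (h | h) <;> intro he <;> simp [he] at h

lemma prod_erase_pairs {m : ℕ} (g : Fin m → Fin m → ℂ) :
    (∏ j : Fin m, ∏ k ∈ Finset.univ.erase j, g j k)
      = ∏ i : Fin m, ∏ j ∈ Finset.Ioi i, (g i j * g j i) := by
  have h1 : (∏ j : Fin m, ∏ k ∈ Finset.univ.erase j, g j k)
      = (∏ j : Fin m, ∏ k ∈ Finset.Ioi j, g j k) * ∏ j : Fin m, ∏ k ∈ Finset.Iio j, g j k := by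
    rw [← Finset.prod_mul_distrib]
    refine Finset.prod_congr rfl (fun j _ => ?_)
    rw [erase_eq_Ioi_union_Iio, Finset.prod_union]
    rw [Finset.disjoint_left]
    intro a ha ha'
    rw [Finset.mem_Ioi] at ha
    rw [Finset.mem_Iio] at ha'
    exact absurd (ha.trans ha') (lt_irrefl _)
  have h2 : (∏ j : Fin m, ∏ k ∈ Finset.Iio j, g j k)
      = ∏ i : Fin m, ∏ j ∈ Finset.Ioi i, g j i := by
    refine Finset.prod_comm' ?_
    intro x y
    simp only [Finset.mem_univ, true_and, and_true, Finset.mem_Iio, Finset.mem_Ioi]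
  rw [h1, h2, ← Finset.prod_mul_distrib]
  refine Finset.prod_congr rfl (fun i _ => ?_)
  rw [← Finset.prod_mul_distrib]

lemma cauchy_det {m : ℕ} (x b : Fin m → ℂ) (h : ∀ i j, x i + b j ≠ 0) :
    (Matrix.of fun i j => (x i + b j)⁻¹).det =
      (∏ i : Fin m, ∏ j ∈ Finset.Ioi i, ((x j - x i) * (b j - b i))) /
        (∏ i : Fin m, ∏ k : Fin m, (x i + b k)) := by
  rcases Nat.eq_zero_or_pos m with hm | hm
  · subst hm
    simp [Matrix.det_isEmpty]
  by_cases hx : Function.Injective x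
  swap
  · -- two equal rows
    simp only [Function.Injective, not_forall] at hx
    obtain ⟨i, j, hij, hne⟩ := hx
    have hdet : (Matrix.of fun i j => (x i + b j)⁻¹).det = 0 := by
      apply Matrix.det_zero_of_row_eq hne
      funext k
      simp [Matrix.of_apply, hij]
    rw [hdet]
    symm
    rw [div_eq_zero_iff]
    left
    rcases lt_or_gt_of_ne hne with hlt | hlt
    · exact Finset.prod_eq_zero (Finset.mem_univ i)
        (Finset.prod_eq_zero (Finset.mem_Ioi.mpr hlt) (by rw [hij]; ring))
    · exact Finset.prod_eq_zero (Finset.mem_univ j)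
        (Finset.prod_eq_zero (Finset.mem_Ioi.mpr hlt) (by rw [hij]; ring))
  by_cases hb : Function.Injective b
  swap
  · -- two equal columns
    simp only [Function.Injective, not_forall] at hb
    obtain ⟨i, j, hij, hne⟩ := hb
    have hdet : (Matrix.of fun i j => (x i + b j)⁻¹).det = 0 := by
      apply Matrix.det_zero_of_column_eq hne
      intro k
      simp [Matrix.of_apply, hij]
    rw [hdet]
    symm
    rw [div_eq_zero_iff]
    left
    rcases lt_or_gt_of_ne hne with hlt | hlt
    · exact Finset.prod_eq_zero (Finset.mem_univ i)
        (Finset.prod_eq_zero (Finset.mem_Ioi.mpr hlt) (by rw [hij]; ring))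
    · exact Finset.prod_eq_zero (Finset.mem_univ j)
        (Finset.prod_eq_zero (Finset.mem_Ioi.mpr hlt) (by rw [hij]; ring))
  -- main case
  set C : Matrix (Fin m) (Fin m) ℂ := Matrix.of fun i j => (x i + b j)⁻¹ with hC
  set D : Matrix (Fin m) (Fin m) ℂ := Matrix.diagonal (fun i => ∏ k : Fin m, (x i + b k)) with hD
  set P : Fin m → Polynomial ℂ :=
    fun j => ∏ k ∈ Finset.univ.erase j, (Polynomial.X + Polynomial.C (b k)) with hPdef
  have hPdeg : ∀ j, (P j).natDegree < m := by
    intro j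
    rw [hPdef]
    have : (∏ k ∈ Finset.univ.erase j, (Polynomial.X + Polynomial.C (b k))).natDegree
        = ∑ k ∈ Finset.univ.erase j, (Polynomial.X + Polynomial.C (b k)).natDegree := by
      apply Polynomial.natDegree_prod
      intro k _
      exact Polynomial.X_add_C_ne_zero (b k)
    rw [this]
    calc ∑ k ∈ Finset.univ.erase j, (Polynomial.X + Polynomial.C (b k)).natDegree
        = ∑ k ∈ Finset.univ.erase j, 1 := by
          refine Finset.sum_congr rfl (fun k _ => Polynomial.natDegree_X_add_C (b k))
      _ = (Finset.univ.erase j).card := by simp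
      _ = m - 1 := by rw [Finset.card_erase_of_mem (Finset.mem_univ j), Finset.card_univ,
            Fintype.card_fin]
      _ < m := Nat.sub_lt hm one_pos
  have hPeval : ∀ j (t : ℂ), (P j).eval t = ∏ k ∈ Finset.univ.erase j, (t + b k) := by
    intro j t
    rw [hPdef]
    rw [Polynomial.eval_prod]
    exact Finset.prod_congr rfl (fun k _ => by simp)
  set Co : Matrix (Fin m) (Fin m) ℂ := Matrix.of fun r j => (P j).coeff (r : ℕ) with hCo
  set Vx : Matrix (Fin m) (Fin m) ℂ := Matrix.vandermonde x with hVx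
  set W : Matrix (Fin m) (Fin m) ℂ := (Matrix.vandermonde (fun i => - b i)).transpose with hW
  have claim1 : D * C = Vx * Co := by
    ext i j
    rw [hD, Matrix.diagonal_mul, Matrix.mul_apply]
    have lhs : (∏ k : Fin m, (x i + b k)) * C i j = ∏ k ∈ Finset.univ.erase j, (x i + b k) := by
      rw [hC]
      rw [← Finset.mul_prod_erase Finset.univ _ (Finset.mem_univ j)]
      simp only [Matrix.of_apply]
      rw [mul_comm (x i + b j) _, mul_assoc, mul_inv_cancel₀ (h i j), mul_one]
    rw [lhs]
    have rhs : ∑ r : Fin m, Vx i r * Co r j = (P j).eval (x i) := by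
      rw [Polynomial.eval_eq_sum_range' (hPdeg j)]
      rw [Finset.sum_range fun r => (P j).coeff r * x i ^ r]
      refine Finset.sum_congr rfl (fun r _ => ?_)
      rw [hVx, hCo]
      simp [Matrix.vandermonde]
      ring
    rw [rhs, hPeval]
  have claim3 : Co.transpose * W = Matrix.diagonal
      (fun j => ∏ k ∈ Finset.univ.erase j, (b k - b j)) := by
    ext j k
    rw [Matrix.mul_apply]
    have : ∑ r : Fin m, Co.transpose j r * W r k = (P j).eval (- b k) := by
      rw [Polynomial.eval_eq_sum_range' (hPdeg j)]
      rw [Finset.sum_range fun r => (P j).coeff r * (- b k) ^ r]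
      refine Finset.sum_congr rfl (fun r _ => ?_)
      rw [hCo, hW]
      simp [Matrix.vandermonde, Matrix.transpose_apply]
    rw [this, hPeval]
    rcases eq_or_ne j k with rfl | hjk
    · rw [Matrix.diagonal_apply_eq]
      refine Finset.prod_congr rfl (fun r _ => by ring)
    · rw [Matrix.diagonal_apply_ne _ hjk]
      apply Finset.prod_eq_zero (Finset.mem_erase.mpr ⟨Ne.symm hjk, Finset.mem_univ k⟩)
      ring
  -- determinants
  have hdetD : D.det = ∏ i : Fin m, ∏ k : Fin m, (x i + b k) := by
    rw [hD, Matrix.det_diagonal]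
  have hdetD0 : D.det ≠ 0 := by
    rw [hdetD]
    exact Finset.prod_ne_zero_iff.mpr
      (fun i _ => Finset.prod_ne_zero_iff.mpr (fun k _ => h i k))
  have hdetVx : Vx.det = ∏ i : Fin m, ∏ j ∈ Finset.Ioi i, (x j - x i) :=
    Matrix.det_vandermonde x
  have hdetW : W.det = ∏ i : Fin m, ∏ j ∈ Finset.Ioi i, (b i - b j) := by
    rw [hW, Matrix.det_transpose, Matrix.det_vandermonde]
    refine Finset.prod_congr rfl (fun i _ => Finset.prod_congr rfl (fun j _ => by ring))
  have hdetW0 : W.det ≠ 0 := by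
    rw [hdetW]
    refine Finset.prod_ne_zero_iff.mpr (fun i _ => Finset.prod_ne_zero_iff.mpr (fun j hj => ?_))
    rw [Finset.mem_Ioi] at hj
    exact sub_ne_zero_of_ne (fun he => (ne_of_lt hj) (hb he))
  have hdetN : (Matrix.diagonal (fun j => ∏ k ∈ Finset.univ.erase j, (b k - b j))).det
      = ∏ i : Fin m, ∏ j ∈ Finset.Ioi i, ((b j - b i) * (b i - b j)) := by
    rw [Matrix.det_diagonal]
    exact prod_erase_pairs (fun j k => b k - b j)
  have hCoW : Co.det * W.det = ∏ i : Fin m, ∏ j ∈ Finset.Ioi i, ((b j - b i) * (b i - b j)) := by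
    rw [← Matrix.det_transpose Co, ← Matrix.det_mul, claim3, hdetN]
  have hpairsplit : (∏ i : Fin m, ∏ j ∈ Finset.Ioi i, ((b j - b i) * (b i - b j)))
      = (∏ i : Fin m, ∏ j ∈ Finset.Ioi i, (b j - b i)) * ∏ i : Fin m, ∏ j ∈ Finset.Ioi i, (b i - b j) := by
    rw [← Finset.prod_mul_distrib]
    exact Finset.prod_congr rfl (fun i _ => Finset.prod_mul_distrib)
  have hdetCo : Co.det = ∏ i : Fin m, ∏ j ∈ Finset.Ioi i, (b j - b i) := by
    have hWne : (∏ i : Fin m, ∏ j ∈ Finset.Ioi i, (b i - b j)) ≠ 0 := by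
      rw [← hdetW]; exact hdetW0
    rw [hpairsplit, hdetW] at hCoW
    exact mul_right_cancel₀ hWne hCoW
  have hDC : D.det * C.det = Vx.det * Co.det := by
    rw [← Matrix.det_mul, ← Matrix.det_mul, claim1]
  rw [hdetD, hdetVx, hdetCo] at hDC
  rw [eq_div_iff (by rw [← hdetD]; exact hdetD0)]
  rw [mul_comm C.det _, hDC]
  rw [← Finset.prod_mul_distrib]
  exact Finset.prod_congr rfl (fun i _ => Finset.prod_mul_distrib.symm)



/-- Algebraic core of Proposition 2.9: the Cauchy-determinant product form of the
disconnected x-y duality formula for unramified `y` equals the sum over set partitions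
of `{1,…,n}` of cyclic contributions. -/
theorem xy_duality_cauchy_partition_identity (n : ℕ) (hn : 1 ≤ n) (ℏ : ℂ) (hℏ : ℏ ≠ 0)
    (y u : Fin n → ℂ) (hu : ∀ i, u i ≠ 0)
    (hy : ∀ i j : Fin n, i ≠ j → (y i - y j) ^ 2 ≠ (ℏ ^ 2 / 4) * (u i + u j) ^ 2) :
    (∏ i : Fin n, (ℏ * u i)⁻¹) *
        (∏ i : Fin n, ∏ j ∈ Finset.Ioi i,
          ((y i - y j) ^ 2 - (ℏ ^ 2 / 4) * (u i - u j) ^ 2) /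
            ((y i - y j) ^ 2 - (ℏ ^ 2 / 4) * (u i + u j) ^ 2)) =
      ∑ π ∈ Finset.univ.filter (fun π : Finset (Finset (Fin n)) =>
          (∀ B ∈ π, B.Nonempty) ∧ ∀ i : Fin n, ∃! B, B ∈ π ∧ i ∈ B),
        ∏ B ∈ π,
          ((-1 : ℂ) ^ (B.card - 1) *
            ∑ σ ∈ Finset.univ.filter (fun σ : Equiv.Perm {x // x ∈ B} =>
                ∀ i j : {x // x ∈ B}, ∃ k : ℕ, (σ ^ k) i = j),
              ∏ i : {x // x ∈ B},
                (y i.1 - y ((σ i) : Fin n) + (ℏ / 2) * (u i.1 + u ((σ i) : Fin n)))⁻¹) := by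
  classical
  have key := perm_sum_eq_partition_sum (n := n)
    (fun a c => (y a - y c + (ℏ / 2) * (u a + u c))⁻¹)
  refine Eq.trans ?_ key
  -- now prove the product formula equals the signed permutation sum, via the Cauchy determinant
  set x' : Fin n → ℂ := fun i => -y i + (ℏ / 2) * u i with hx'
  set b' : Fin n → ℂ := fun j => y j + (ℏ / 2) * u j with hb'
  have hM : ∀ i j, x' i + b' j ≠ 0 := by
    intro i j
    rcases eq_or_ne i j with rfl | hij
    · intro h0
      apply mul_ne_zero hℏ (hu i)
      rw [hx', hb'] at h0
      linear_combination h0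
    · intro h0
      apply hy j i (Ne.symm hij)
      rw [hx', hb'] at h0
      have h1 : y j - y i = -((ℏ / 2) * (u i + u j)) := by linear_combination h0
      calc (y j - y i) ^ 2 = (-((ℏ / 2) * (u i + u j))) ^ 2 := by rw [h1]
        _ = ℏ ^ 2 / 4 * (u j + u i) ^ 2 := by ring
  have hdet : (Matrix.of fun i j => (x' i + b' j)⁻¹).det =
      ∑ σ : Equiv.Perm (Fin n), ((Equiv.Perm.sign σ : ℤ) : ℂ) *
        ∏ i : Fin n, (y i - y (σ i) + (ℏ / 2) * (u i + u (σ i)))⁻¹ := by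
    rw [Matrix.det_apply']
    refine Finset.sum_congr rfl (fun σ _ => ?_)
    congr 1
    refine Finset.prod_congr rfl (fun i _ => ?_)
    simp only [Matrix.of_apply, hx', hb']
    congr 1
    ring
  rw [cauchy_det x' b' hM] at hdet
  rw [← hdet]
  -- algebra: rewrite the Cauchy quotient into the stated product
  have hNum : (∏ i : Fin n, ∏ j ∈ Finset.Ioi i, ((x' j - x' i) * (b' j - b' i)))
      = ∏ i : Fin n, ∏ j ∈ Finset.Ioi i,
          (-((y i - y j) ^ 2 - (ℏ ^ 2 / 4) * (u i - u j) ^ 2)) := by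
    refine Finset.prod_congr rfl (fun i _ => Finset.prod_congr rfl (fun j _ => ?_))
    rw [hx', hb']
    ring
  have hDen : (∏ i : Fin n, ∏ k : Fin n, (x' i + b' k))
      = (∏ i : Fin n, (ℏ * u i)) * ∏ i : Fin n, ∏ j ∈ Finset.Ioi i,
          (-((y i - y j) ^ 2 - (ℏ ^ 2 / 4) * (u i + u j) ^ 2)) := by
    have step : ∀ i : Fin n, (∏ k : Fin n, (x' i + b' k)) =
        (ℏ * u i) * ∏ k ∈ Finset.univ.erase i, (x' i + b' k) := by
      intro i
      rw [← Finset.mul_prod_erase Finset.univ _ (Finset.mem_univ i)]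
      congr 1
      rw [hx', hb']
      ring
    rw [Finset.prod_congr rfl (fun i _ => step i), Finset.prod_mul_distrib]
    congr 1
    rw [prod_erase_pairs (fun i k => x' i + b' k)]
    refine Finset.prod_congr rfl (fun i _ => Finset.prod_congr rfl (fun j _ => ?_))
    rw [hx', hb']
    ring
  rw [hNum, hDen]
  have hDij : ∀ (i j : Fin n), i ≠ j →
      (-((y i - y j) ^ 2 - (ℏ ^ 2 / 4) * (u i + u j) ^ 2)) ≠ 0 := by
    intro i j hij
    exact neg_ne_zero.mpr (sub_ne_zero_of_ne (hy i j hij))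
  have hprodD : (∏ i : Fin n, ∏ j ∈ Finset.Ioi i,
      (-((y i - y j) ^ 2 - (ℏ ^ 2 / 4) * (u i + u j) ^ 2))) ≠ 0 := by
    refine Finset.prod_ne_zero_iff.mpr (fun i _ => Finset.prod_ne_zero_iff.mpr (fun j hj => ?_))
    exact hDij i j (ne_of_lt (Finset.mem_Ioi.mp hj))
  have hprodU : (∏ i : Fin n, (ℏ * u i)) ≠ 0 :=
    Finset.prod_ne_zero_iff.mpr (fun i _ => mul_ne_zero hℏ (hu i))
  rw [div_mul_eq_div_div_swap, div_eq_mul_inv _ (∏ i : Fin n, (ℏ * u i)),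
    mul_comm _ (∏ i : Fin n, (ℏ * u i))⁻¹, ← Finset.prod_inv_distrib]
  congr 1
  rw [← Finset.prod_div_distrib]
  refine Finset.prod_congr rfl (fun i _ => ?_)
  rw [← Finset.prod_div_distrib]
  refine Finset.prod_congr rfl (fun j hj => ?_)
  rw [neg_div_neg_eq]
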